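/- A binary word x of length n (0 = opening parenthesis, 1 = closing parenthesis) is a Dyck word of depth at most k if and only if the extended word x' = 1^k · x · 0^k contains no substring whose balance has absolute value k+1. -/
import Mathlib


/-- Balance of a binary word: number of 0s (false) minus number of 1s (true). -/
def bal (s : List Bool) : ℤ := (s.count false : ℤ) - (s.count true : ℤ)

/-- The substring x[i..j] (inclusive, 0-indexed). -/
def sub (x : List Bool) (i j : ℕ) : List Bool := (x.drop i).take (j + 1 - i)

/-- x is a Dyck word of depth at most k: every prefix has balance in [0,k] and total balance 0. -/
def DyckBounded (x : List Bool) (k : ℕ) : Prop :=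
  (∀ p, p <+: x → 0 ≤ bal p ∧ bal p ≤ (k : ℤ)) ∧ bal x = 0

lemma bal_nil : bal [] = 0 := by simp [bal]

lemma bal_append (a b : List Bool) : bal (a ++ b) = bal a + bal b := by
  simp [bal, List.count_append]; ring

lemma bal_replicate_true (k : ℕ) : bal (List.replicate k true) = -(k : ℤ) := by
  simp [bal, List.count_replicate]

lemma bal_replicate_false (k : ℕ) : bal (List.replicate k false) = (k : ℤ) := by
  simp [bal, List.count_replicate]

lemma bal_singleton (a : Bool) : bal [a] = 1 ∨ bal [a] = -1 := by
  cases a <;> simp [bal]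

lemma ivt_pos (c : ℤ) (hc : 0 ≤ c) :
    ∀ w : List Bool, c ≤ bal w → ∃ p, p <+: w ∧ bal p = c := by
  intro w
  induction w using List.reverseRecOn with
  | nil =>
    intro h
    rw [bal_nil] at h
    exact ⟨[], List.nil_prefix, by rw [bal_nil]; omega⟩
  | append_singleton w a ih =>
    intro h
    by_cases hw : c ≤ bal w
    · obtain ⟨p, hp, hb⟩ := ih hw
      exact ⟨p, hp.trans (List.prefix_append _ _), hb⟩
    · refine ⟨w ++ [a], List.prefix_refl _, ?_⟩
      have ha := bal_singleton a
      rw [bal_append] at h ⊢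
      omega

lemma ivt_neg (c : ℤ) (hc : c ≤ 0) :
    ∀ w : List Bool, bal w ≤ c → ∃ p, p <+: w ∧ bal p = c := by
  intro w
  induction w using List.reverseRecOn with
  | nil =>
    intro h
    rw [bal_nil] at h
    exact ⟨[], List.nil_prefix, by rw [bal_nil]; omega⟩
  | append_singleton w a ih =>
    intro h
    by_cases hw : bal w ≤ c
    · obtain ⟨p, hp, hb⟩ := ih hw
      exact ⟨p, hp.trans (List.prefix_append _ _), hb⟩
    · refine ⟨w ++ [a], List.prefix_refl _, ?_⟩
      have ha := bal_singleton a
      rw [bal_append] at h ⊢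
      omega

/-- x is a Dyck word of depth at most k iff x' = 1^k x 0^k contains no substring of
balance ±(k+1). -/
theorem dyck_iff_no_large_balance_substring (x : List Bool) (n k : ℕ) (hn : x.length = n) :
    DyckBounded x k ↔
      ¬ ∃ s, s <:+: (List.replicate k true ++ x ++ List.replicate k false) ∧
        |bal s| = (k : ℤ) + 1 := by
  set w : List Bool := List.replicate k true ++ x ++ List.replicate k false with hw
  constructor
  · rintro ⟨hpre, hbal⟩ ⟨s, hs, habs⟩
    -- every prefix of w has balance in [-k, 0]
    have key : ∀ q, q <+: w → -(k : ℤ) ≤ bal q ∧ bal q ≤ 0 := by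
      intro q hq
      obtain ⟨r, hr⟩ := hq
      have hq' : q = w.take q.length := by
        rw [← hr]; simp
      have hdecomp : w.take q.length =
          (List.replicate k true).take q.length ++
            (x.take (q.length - k) ++ (List.replicate k false).take (q.length - k - n)) := by
        rw [hw, List.append_assoc, List.take_append,
          List.take_append]
        simp [hn]
      set m := q.length with hm
      have hbq : bal q = -(((m ⊓ k : ℕ)) : ℤ) +
          (bal (x.take (m - k)) + ((((m - k - n) ⊓ k : ℕ)) : ℤ)) := by
        rw [hq', hdecomp, bal_append, bal_append, List.take_replicate, List.take_replicate,
          bal_replicate_true, bal_replicate_false]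
      have hmid := hpre (x.take (m - k)) (List.take_prefix _ _)
      by_cases h2 : k + n ≤ m
      · have hx : x.take (m - k) = x := by
          apply List.take_of_length_le; omega
        rw [hx, hbal] at hbq
        constructor <;> omega
      · by_cases h1 : k ≤ m
        · constructor <;> omega
        · have hz : m - k = 0 := by omega
          rw [hz] at hbq
          simp only [List.take_zero, bal_nil] at hbq
          constructor <;> omega
    obtain ⟨t, u, htu⟩ := hs
    have ht : t <+: w := ⟨s ++ u, by rw [← htu]; simp⟩
    have hts : t ++ s <+: w := ⟨u, by simp [← htu]⟩
    have h1 := key t ht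
    have h2 := key (t ++ s) hts
    rw [bal_append] at h2
    have : |bal s| ≤ (k : ℤ) := by rw [abs_le]; omega
    omega
  · intro hno
    by_contra hd
    apply hno
    by_cases hbad : ∃ p, p <+: x ∧ (bal p < 0 ∨ (k : ℤ) < bal p)
    · obtain ⟨p, hp, hcase⟩ := hbad
      obtain ⟨r, hr⟩ := hp
      rcases hcase with hneg | hpos
      · -- use prefix 1^k ++ p, balance ≤ -(k+1)
        have hpref : List.replicate k true ++ p <+: w :=
          ⟨r ++ List.replicate k false, by rw [hw, ← hr]; simp⟩
        have hb : bal (List.replicate k true ++ p) ≤ -((k : ℤ) + 1) := by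
          rw [bal_append, bal_replicate_true]; omega
        obtain ⟨s, hs, hbs⟩ := ivt_neg (-((k : ℤ) + 1)) (by omega) _ hb
        refine ⟨s, (hs.trans hpref).isInfix, ?_⟩
        rw [hbs, abs_neg]
        rw [abs_of_nonneg (by omega : (0:ℤ) ≤ (k : ℤ) + 1)]
      · -- p itself is an infix, balance ≥ k+1
        obtain ⟨s, hs, hbs⟩ := ivt_pos ((k : ℤ) + 1) (by omega) p (by omega)
        have hpinf : p <:+: w :=
          ⟨List.replicate k true, r ++ List.replicate k false, by rw [hw, ← hr]; simp⟩
        refine ⟨s, (hs.isInfix).trans hpinf, ?_⟩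
        rw [hbs, abs_of_nonneg (by omega : (0:ℤ) ≤ (k : ℤ) + 1)]
    · push_neg at hbad
      have hpre : ∀ p, p <+: x → 0 ≤ bal p ∧ bal p ≤ (k : ℤ) := by
        intro p hp
        have := hbad p hp
        omega
      have hbx : bal x ≠ 0 := fun h0 => hd ⟨hpre, h0⟩
      have hbxpos : 1 ≤ bal x := by
        have := hpre x (List.prefix_refl _)
        omega
      have hb : (k : ℤ) + 1 ≤ bal (x ++ List.replicate k false) := by
        rw [bal_append, bal_replicate_false]; omega
      obtain ⟨s, hs, hbs⟩ := ivt_pos ((k : ℤ) + 1) (by omega) _ hb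
      have hsuf : x ++ List.replicate k false <:+: w :=
        ⟨List.replicate k true, [], by rw [hw]; simp⟩
      refine ⟨s, hs.isInfix.trans hsuf, ?_⟩
      rw [hbs, abs_of_nonneg (by omega : (0:ℤ) ≤ (k : ℤ) + 1)]
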